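/- Irrelevant coefficients: let Λ(x) be the minimal-degree nonzero solution of the SPI problem and let u ≥ deg Λ(x). Then the SPI solution is unchanged if any coefficient b_ℓ⁽ⁱ⁾ of b⁽ⁱ⁾(x) with ℓ < τ⁽ⁱ⁾ − u is changed, and likewise if any coefficient m_s⁽ⁱ⁾ of m⁽ⁱ⁾(x) with s ≤ τ⁽ⁱ⁾ − u is changed (keeping degrees and leading coefficients fixed). Equivalently: whether a polynomial Λ with deg Λ ≤ u satisfies deg(b⁽ⁱ⁾ Λ mod m⁽ⁱ⁾) < τ⁽ⁱ⁾ depends only on the coefficients b_ℓ⁽ⁱ⁾ with ℓ ≥ τ⁽ⁱ⁾ − u and m_s⁽ⁱ⁾ with s > τ⁽ⁱ⁾ − u. -/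

import Mathlib

open Polynomial

/-- Irrelevant coefficients: for polynomials `Λ` with `deg Λ ≤ u`, whether the SPI
conditions `deg(b⁽ⁱ⁾ Λ mod m⁽ⁱ⁾) < τ⁽ⁱ⁾` hold depends only on the coefficients
`b⁽ⁱ⁾_ℓ` with `ℓ ≥ τ⁽ⁱ⁾ − u` and `m⁽ⁱ⁾_s` with `s > τ⁽ⁱ⁾ − u` (keeping the degrees of
the moduli fixed).  In particular the SPI solution is unchanged by altering the
other coefficients. -/
private lemma spi_key {F : Type*} [Field F] (b m b' m' : F[X]) (τ u : ℕ)
    (hm : 1 ≤ m.degree) (hb : b.degree < m.degree)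
    (hτ : (τ : WithBot ℕ) ≤ m.degree)
    (hm' : m'.degree = m.degree) (hb' : b'.degree < m'.degree)
    (hbe : ∀ ℓ, τ ≤ ℓ + u → b.coeff ℓ = b'.coeff ℓ)
    (hme : ∀ s, τ < s + u → m.coeff s = m'.coeff s)
    (Λ : F[X]) (hΛu : Λ.degree ≤ (u : WithBot ℕ)) :
    ((b * Λ % m) - (b' * Λ % m')).degree < (τ : WithBot ℕ) := by
  have hbotτ : (⊥ : WithBot ℕ) < (τ : WithBot ℕ) := by
    exact bot_lt_iff_ne_bot.2 (by simp)
  have hm0 : m ≠ 0 := by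
    intro h; rw [h, degree_zero] at hm; simp at hm
  have hm'0 : m' ≠ 0 := by
    intro h; rw [h, degree_zero] at hm'
    rw [← hm'] at hm; simp at hm
  -- degree bound on (b - b') * Λ
  have hd1 : ((b - b') * Λ).degree < (τ : WithBot ℕ) := by
    rcases eq_or_ne (b - b') 0 with h | h
    · rw [h, zero_mul, degree_zero]; exact hbotτ
    · set n := (b - b').natDegree with hn
      have hc : (b - b').coeff n ≠ 0 := by
        rw [hn]; exact mt leadingCoeff_eq_zero.1 h
      have hnu : n + u < τ := by
        by_contra hcon
        push_neg at hcon
        exact hc (by simp [coeff_sub, hbe n hcon, sub_self])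
      calc ((b - b') * Λ).degree ≤ (b - b').degree + Λ.degree := degree_mul_le _ _
        _ ≤ (n : WithBot ℕ) + (u : WithBot ℕ) := by
            rw [(b-b').degree_eq_natDegree h]
            exact add_le_add_right hΛu _
        _ = ((n + u : ℕ) : WithBot ℕ) := by exact_mod_cast rfl
        _ < (τ : WithBot ℕ) := by exact_mod_cast hnu
  -- degree bound on (m - m') * p for any p of degree < u
  have hd3 : ∀ p : F[X], p.degree < (u : WithBot ℕ) →
      ((m - m') * p).degree < (τ : WithBot ℕ) := by
    intro p hp
    rcases eq_or_ne (m - m') 0 with h | h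
    · rw [h, zero_mul, degree_zero]; exact hbotτ
    · set n := (m - m').natDegree with hn
      have hc : (m - m').coeff n ≠ 0 := by
        rw [hn]; exact mt leadingCoeff_eq_zero.1 h
      have hnu : n + u ≤ τ := by
        by_contra hcon
        push_neg at hcon
        exact hc (by simp [coeff_sub, hme n hcon, sub_self])
      calc ((m - m') * p).degree ≤ (m - m').degree + p.degree := degree_mul_le _ _
        _ < (n : WithBot ℕ) + (u : WithBot ℕ) := by
            rw [(m-m').degree_eq_natDegree h]
            exact WithBot.add_lt_add_left (by simp) hp
        _ = ((n + u : ℕ) : WithBot ℕ) := by exact_mod_cast rfl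
        _ ≤ (τ : WithBot ℕ) := by exact_mod_cast hnu
  set q := b * Λ / m with hqdef
  set r := b * Λ % m with hrdef
  set q' := b' * Λ / m' with hq'def
  set r' := b' * Λ % m' with hr'def
  have heq : m * q + r = b * Λ := EuclideanDomain.div_add_mod (b * Λ) m
  have heq' : m' * q' + r' = b' * Λ := EuclideanDomain.div_add_mod (b' * Λ) m'
  have hr : r.degree < m.degree := EuclideanDomain.mod_lt _ hm0
  have hr' : r'.degree < m.degree := hm' ▸ EuclideanDomain.mod_lt _ hm'0
  -- quotient degree bounds
  have hquot : ∀ (B M : F[X]), M ≠ 0 → B.degree < M.degree →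
      (B * Λ / M).degree < (u : WithBot ℕ) := by
    intro B M hM0 hBM
    have h1 : M * (B * Λ / M) = B * Λ - B * Λ % M :=
      eq_sub_of_add_eq (EuclideanDomain.div_add_mod (B * Λ) M)
    have hmul : (M * (B * Λ / M)).degree < M.degree + (u : WithBot ℕ) := by
      rw [h1]
      refine lt_of_le_of_lt (degree_sub_le _ _) (max_lt ?_ ?_)
      · calc (B * Λ).degree ≤ B.degree + Λ.degree := degree_mul_le _ _
          _ ≤ B.degree + (u : WithBot ℕ) := add_le_add_right hΛu _
          _ < M.degree + (u : WithBot ℕ) :=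
              WithBot.add_lt_add_right (by simp) hBM
      · calc (B * Λ % M).degree < M.degree := EuclideanDomain.mod_lt _ hM0
          _ ≤ M.degree + (u : WithBot ℕ) :=
              le_add_of_nonneg_right (by exact_mod_cast Nat.zero_le u)
    rw [degree_mul] at hmul
    exact lt_of_add_lt_add_left hmul
  have hq : q.degree < (u : WithBot ℕ) := hquot b m hm0 hb
  have hq' : q'.degree < (u : WithBot ℕ) := hquot b' m' hm'0 hb'
  -- the two quotients agree
  have hqq : q = q' := by
    have hkey : m * (q - q') = (b - b') * Λ - (r - r') - (m - m') * q' := by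
      linear_combination heq - heq'
    have hdeg : (m * (q - q')).degree < m.degree := by
      rw [hkey]
      refine lt_of_le_of_lt (degree_sub_le _ _) (max_lt (lt_of_le_of_lt
        (degree_sub_le _ _) (max_lt ?_ ?_)) ?_)
      · exact lt_of_lt_of_le hd1 hτ
      · exact lt_of_le_of_lt (degree_sub_le _ _) (max_lt hr hr')
      · exact lt_of_lt_of_le (hd3 q' hq') hτ
    by_contra hne
    have hsub : q - q' ≠ 0 := sub_ne_zero.2 hne
    have : m.degree ≤ (m * (q - q')).degree := by
      rw [degree_mul]
      exact le_add_of_nonneg_right (zero_le_degree_iff.2 hsub)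
    exact absurd (lt_of_le_of_lt this hdeg) (lt_irrefl _)
  have hfinal : r - r' = (b - b') * Λ - (m - m') * q := by
    rw [hqq] at heq ⊢
    linear_combination heq - heq'
  rw [hfinal]
  exact lt_of_le_of_lt (degree_sub_le _ _) (max_lt hd1 (hd3 q (hqq ▸ hq)))

theorem spi_irrelevant_coefficients {F : Type*} [Field F] {L : ℕ}
    (b m b' m' : Fin L → F[X]) (τ : Fin L → ℕ) (u : ℕ)
    (hm : ∀ i, 1 ≤ (m i).degree)
    (hb : ∀ i, (b i).degree < (m i).degree)
    (hτ : ∀ i, (τ i : WithBot ℕ) ≤ (m i).degree)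
    (hm' : ∀ i, (m' i).degree = (m i).degree)
    (hb' : ∀ i, (b' i).degree < (m' i).degree)
    (hbe : ∀ i ℓ, τ i ≤ ℓ + u → (b i).coeff ℓ = (b' i).coeff ℓ)
    (hme : ∀ i s, τ i < s + u → (m i).coeff s = (m' i).coeff s)
    (Λ : F[X]) (hΛ0 : Λ ≠ 0) (hΛu : Λ.degree ≤ (u : WithBot ℕ)) :
    (∀ i, (b i * Λ % m i).degree < (τ i : WithBot ℕ)) ↔
      (∀ i, (b' i * Λ % m' i).degree < (τ i : WithBot ℕ)) := by
  constructor
  · intro h i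
    have key := spi_key (b i) (m i) (b' i) (m' i) (τ i) u (hm i) (hb i) (hτ i)
      (hm' i) (hb' i) (hbe i) (hme i) Λ hΛu
    have : b' i * Λ % m' i = (b i * Λ % m i) - ((b i * Λ % m i) - (b' i * Λ % m' i)) := by
      ring
    rw [this]
    exact lt_of_le_of_lt (degree_sub_le _ _) (max_lt (h i) key)
  · intro h i
    have key := spi_key (b' i) (m' i) (b i) (m i) (τ i) u
      ((hm' i) ▸ hm i) (hb' i) ((hm' i) ▸ hτ i) ((hm' i).symm) (hb i)
      (fun ℓ hℓ => (hbe i ℓ hℓ).symm) (fun s hs => (hme i s hs).symm) Λ hΛu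
    have : b i * Λ % m i = (b' i * Λ % m' i) - ((b' i * Λ % m' i) - (b i * Λ % m i)) := by
      ring
    rw [this]
    exact lt_of_le_of_lt (degree_sub_le _ _) (max_lt (h i) key)
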